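/- Let H be a complex Hilbert space and e ∈ K(H) a partial isometry such that there exists a nonzero rank-one partial isometry orthogonal to e. Then the closed unit ball of the corner e e* K(H) e* e equals the set of x in the closed unit ball of K(H) such that ‖x − v‖ ≤ 1 for every rank-one partial isometry v ∈ K(H) orthogonal to e. -/

import Mathlib

open ContinuousLinearMap

variable {H : Type*} [NormedAddCommGroup H] [InnerProductSpace ℂ H] [CompleteSpace H]

/-- A rank-one partial isometry on `H`: the operator `x ↦ ⟪ξ, x⟫ • η` for unit
vectors `ξ, η`. -/
def IsRankOnePartialIsometry (v : H →L[ℂ] H) : Prop :=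
  ∃ ξ η : H, ‖ξ‖ = 1 ∧ ‖η‖ = 1 ∧ v = (innerSL ℂ ξ).smulRight η

lemma rankOne_adjoint (ξ η : H) :
    adjoint ((innerSL ℂ ξ).smulRight η) = (innerSL ℂ η).smulRight ξ := by
  symm
  rw [eq_adjoint_iff]
  intro x y
  simp [inner_smul_left, inner_smul_right, mul_comm, inner_conj_symm]

lemma zero_of_dist_smul_le (a b : H) (hb : ‖b‖ = 1)
    (h : ∀ θ : ℂ, ‖θ‖ = 1 → ‖a - θ • b‖ ≤ 1) : a = 0 := by
  set c : ℂ := inner ℂ a b with hc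
  set θ : ℂ := if c = 0 then 1 else -(starRingEnd ℂ c) / ‖c‖ with hθ
  have hc0 : c = 0 → a = 0 := by
    intro h0
    have h1 := h 1 (by simp)
    have h2 : ‖a - (1:ℂ) • b‖ ^ 2 ≤ 1 := by
      nlinarith [norm_nonneg (a - (1:ℂ) • b)]
    rw [norm_sub_sq (𝕜 := ℂ)] at h2
    have hi : (inner ℂ a ((1:ℂ) • b) : ℂ) = 0 := by
      rw [inner_smul_right, ← hc, h0, mul_zero]
    have hn : ‖(1:ℂ) • b‖ = 1 := by rw [norm_smul, hb]; simp
    rw [hi, hn] at h2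
    simp only [map_zero, mul_zero, sub_zero, one_pow] at h2
    have : ‖a‖ = 0 := by nlinarith [norm_nonneg a]
    exact norm_eq_zero.mp this
  by_cases h0 : c = 0
  · exact hc0 h0
  have hθ1 : ‖θ‖ = 1 := by
    rw [hθ, if_neg h0, norm_div, norm_neg, RCLike.norm_conj]
    rw [Complex.norm_real, Real.norm_eq_abs, abs_of_nonneg (norm_nonneg c)]
    exact div_self (norm_ne_zero_iff.mpr h0)
  have hθc : θ * c = -(‖c‖ : ℂ) := by
    have h0' : (‖c‖ : ℂ) ≠ 0 := by
      exact_mod_cast norm_ne_zero_iff.mpr h0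
    rw [hθ, if_neg h0]
    field_simp
    rw [RCLike.conj_mul]
    norm_cast
  have h1 := h θ hθ1
  have h2 : ‖a - θ • b‖ ^ 2 ≤ 1 := by
    nlinarith [norm_nonneg (a - θ • b)]
  rw [norm_sub_sq (𝕜 := ℂ)] at h2
  have hib : (inner ℂ a (θ • b) : ℂ) = θ * c := by rw [inner_smul_right, hc]
  rw [hib, hθc] at h2
  have hnb : ‖θ • b‖ = 1 := by rw [norm_smul, hθ1, hb, mul_one]
  rw [hnb, show RCLike.re (-(‖c‖:ℂ)) = -‖c‖ by simp] at h2
  have hcn : ‖c‖ = 0 := by nlinarith [norm_nonneg a, norm_nonneg c]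
  exact hc0 (norm_eq_zero.mp hcn)

set_option maxHeartbeats 1000000 in
/-- If `e` is a compact partial isometry admitting some rank-one partial isometry
orthogonal to it, then the closed unit ball of the corner `e e* K(H) e* e` is exactly the
set of compact contractions `x` with `‖x - v‖ ≤ 1` for every rank-one partial isometry
`v` orthogonal to `e`. -/
theorem stmt5 (e : H →L[ℂ] H)
    (hec : IsCompactOperator (⇑e)) (hpe : e ∘L adjoint e ∘L e = e)
    (hex : ∃ v : H →L[ℂ] H, IsRankOnePartialIsometry v ∧
      v ∘L adjoint e = 0 ∧ adjoint e ∘L v = 0) :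
    {x : H →L[ℂ] H | IsCompactOperator (⇑x) ∧ ‖x‖ ≤ 1 ∧
        (e ∘L adjoint e) ∘L x ∘L (adjoint e ∘L e) = x} =
      {x : H →L[ℂ] H | IsCompactOperator (⇑x) ∧ ‖x‖ ≤ 1 ∧
        ∀ v : H →L[ℂ] H, IsRankOnePartialIsometry v →
          v ∘L adjoint e = 0 → adjoint e ∘L v = 0 → ‖x - v‖ ≤ 1} := by
  -- basic facts about e
  have hpe' : ∀ u : H, e (adjoint e (e u)) = e u := fun u =>
    ContinuousLinearMap.ext_iff.mp hpe u
  have hee : ∀ u : H, adjoint e (e (adjoint e u)) = adjoint e u := by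
    intro u
    have h := congrArg adjoint hpe
    rw [adjoint_comp, adjoint_comp, adjoint_adjoint] at h
    exact ContinuousLinearMap.ext_iff.mp h u
  have hq : (adjoint e ∘L e) ∘L (adjoint e ∘L e) = adjoint e ∘L e := by
    ext u; simp [hee]
  have hqnorm : ‖adjoint e ∘L e‖ ≤ 1 := by
    have h1 : ‖adjoint (adjoint e ∘L e) ∘L (adjoint e ∘L e)‖
        = ‖adjoint e ∘L e‖ * ‖adjoint e ∘L e‖ := norm_adjoint_comp_self _
    rw [adjoint_comp, adjoint_adjoint, hq] at h1
    nlinarith [norm_nonneg (adjoint e ∘L e)]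
  have henorm : ‖e‖ ≤ 1 := by
    have h1 : ‖adjoint e ∘L e‖ = ‖e‖ * ‖e‖ := norm_adjoint_comp_self _
    nlinarith [norm_nonneg e]
  -- extracting orthogonality data from the composition conditions
  have hkerl : ∀ ξ η : H, ‖η‖ = 1 →
      ((innerSL ℂ ξ).smulRight η) ∘L adjoint e = 0 → e ξ = 0 := by
    intro ξ η hη hve
    have h := ContinuousLinearMap.ext_iff.mp hve (e ξ)
    simp only [coe_comp', Function.comp_apply, smulRight_apply, innerSL_apply_apply,
      zero_apply] at h
    rw [adjoint_inner_right] at h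
    rcases smul_eq_zero.mp h with h' | h'
    · exact inner_self_eq_zero.mp h'
    · exfalso
      rw [h', norm_zero] at hη
      exact one_ne_zero hη.symm
  have hkerr : ∀ ξ η : H, ‖ξ‖ = 1 →
      adjoint e ∘L ((innerSL ℂ ξ).smulRight η) = 0 → adjoint e η = 0 := by
    intro ξ η hξ hev
    have h := ContinuousLinearMap.ext_iff.mp hev ξ
    simp only [coe_comp', Function.comp_apply, smulRight_apply, innerSL_apply_apply,
      zero_apply, map_smul] at h
    rw [inner_self_eq_norm_sq_to_K, hξ] at h
    simpa using h
  ext x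
  simp only [Set.mem_setOf_eq]
  constructor
  · rintro ⟨hxc, hx1, heq⟩
    refine ⟨hxc, hx1, ?_⟩
    rintro v ⟨ξ, η, hξ, hη, rfl⟩ hve hev
    have heξ : e ξ = 0 := hkerl ξ η hη hve
    have heη : adjoint e η = 0 := hkerr ξ η hξ hev
    refine opNorm_le_bound _ zero_le_one fun u => ?_
    rw [one_mul]
    set qu := adjoint e (e u) with hqu
    have hxu : e (adjoint e (x qu)) = x u := ContinuousLinearMap.ext_iff.mp heq u
    have happ : (x - (innerSL ℂ ξ).smulRight η) u = x u - (inner ℂ ξ u : ℂ) • η := rfl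
    have hinner : (inner ℂ (x u) ((inner ℂ ξ u : ℂ) • η) : ℂ) = 0 := by
      rw [inner_smul_right]
      have hxη : (inner ℂ (x u) η : ℂ) = 0 := by
        rw [← hxu, ← inner_conj_symm, ← adjoint_inner_left, heη, inner_zero_left, map_zero]
      rw [hxη, mul_zero]
    have hpyth1 : ‖x u - (inner ℂ ξ u : ℂ) • η‖ ^ 2
        = ‖x u‖ ^ 2 + ‖(inner ℂ ξ u : ℂ) • η‖ ^ 2 := by
      rw [norm_sub_sq (𝕜 := ℂ), hinner]
      simp
    have hxub : ‖x u‖ ≤ ‖qu‖ := by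
      rw [← hxu]
      have t1 : ‖x qu‖ ≤ ‖qu‖ := by
        calc ‖x qu‖ ≤ ‖x‖ * ‖qu‖ := le_opNorm _ _
          _ ≤ 1 * ‖qu‖ := mul_le_mul_of_nonneg_right hx1 (norm_nonneg _)
          _ = ‖qu‖ := one_mul _
      have ha : ‖adjoint e‖ ≤ 1 := by
        rw [adjoint.norm_map]; exact henorm
      have t2 : ‖adjoint e (x qu)‖ ≤ ‖qu‖ := by
        calc ‖adjoint e (x qu)‖ ≤ ‖adjoint e‖ * ‖x qu‖ := le_opNorm _ _
          _ ≤ 1 * ‖qu‖ := mul_le_mul ha t1 (norm_nonneg _) zero_le_one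
          _ = ‖qu‖ := one_mul _
      calc ‖e (adjoint e (x qu))‖ ≤ ‖e‖ * ‖adjoint e (x qu)‖ := le_opNorm _ _
        _ ≤ 1 * ‖qu‖ := mul_le_mul henorm t2 (norm_nonneg _) zero_le_one
        _ = ‖qu‖ := one_mul _
    have hxib : ‖(inner ℂ ξ u : ℂ) • η‖ ≤ ‖u - qu‖ := by
      rw [norm_smul, hη, mul_one]
      have hiq : (inner ℂ ξ u : ℂ) = inner ℂ ξ (u - qu) := by
        rw [inner_sub_right, hqu, adjoint_inner_right, heξ, inner_zero_left, sub_zero]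
      rw [hiq]
      calc ‖(inner ℂ ξ (u - qu) : ℂ)‖ ≤ ‖ξ‖ * ‖u - qu‖ := norm_inner_le_norm ξ _
        _ = ‖u - qu‖ := by rw [hξ, one_mul]
    have hpyth2 : ‖qu‖ ^ 2 + ‖u - qu‖ ^ 2 = ‖u‖ ^ 2 := by
      have hor : (inner ℂ qu (u - qu) : ℂ) = 0 := by
        rw [inner_sub_right, hqu, adjoint_inner_left, adjoint_inner_left, hpe' u, sub_self]
      have hns := norm_add_sq (𝕜 := ℂ) qu (u - qu)
      rw [hor, add_sub_cancel] at hns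
      simp only [map_zero, mul_zero, add_zero] at hns
      linarith
    have hsq : ‖(x - (innerSL ℂ ξ).smulRight η) u‖ ^ 2 ≤ ‖u‖ ^ 2 := by
      rw [happ, hpyth1, ← hpyth2]
      have := sq_le_sq' (by linarith [norm_nonneg (x u), norm_nonneg qu] : -‖qu‖ ≤ ‖x u‖) hxub
      have := sq_le_sq' (by
        linarith [norm_nonneg ((inner ℂ ξ u : ℂ) • η), norm_nonneg (u - qu)] :
          -‖u - qu‖ ≤ ‖(inner ℂ ξ u : ℂ) • η‖) hxib
      linarith
    have := Real.sqrt_le_sqrt hsq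
    rwa [Real.sqrt_sq (norm_nonneg _), Real.sqrt_sq (norm_nonneg _)] at this
  · rintro ⟨hxc, hx1, hx⟩
    refine ⟨hxc, hx1, ?_⟩
    obtain ⟨v₀, ⟨ξ₀, η₀, hξ₀, hη₀, rfl⟩, hv₀e, hev₀⟩ := hex
    have heξ₀ : e ξ₀ = 0 := hkerl ξ₀ η₀ hη₀ hv₀e
    have heη₀ : adjoint e η₀ = 0 := hkerr ξ₀ η₀ hξ₀ hev₀
    have hmk : ∀ (ξ η : H), ‖ξ‖ = 1 → ‖η‖ = 1 → e ξ = 0 → adjoint e η = 0 →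
        ∀ θ : ℂ, ‖θ‖ = 1 → ‖x - (innerSL ℂ (θ • ξ)).smulRight η‖ ≤ 1 := by
      intro ξ η hξ hη heξ heη θ hθ
      refine hx _ ⟨θ • ξ, η, by rw [norm_smul, hθ, hξ, mul_one], hη, rfl⟩ ?_ ?_
      · ext u
        simp only [coe_comp', Function.comp_apply, smulRight_apply, innerSL_apply_apply,
          zero_apply]
        rw [inner_smul_left, adjoint_inner_right, heξ, inner_zero_left, mul_zero, zero_smul]
      · ext u
        simp only [coe_comp', Function.comp_apply, smulRight_apply, innerSL_apply_apply,
          zero_apply, map_smul]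
        rw [heη, smul_zero]
    have key1 : ∀ ξ : H, e ξ = 0 → x ξ = 0 := by
      have key1u : ∀ ζ : H, ‖ζ‖ = 1 → e ζ = 0 → x ζ = 0 := by
        intro ζ hζ heζ
        apply zero_of_dist_smul_le _ η₀ hη₀
        intro θ hθ
        have hv := hmk ζ η₀ hζ hη₀ heζ heη₀ (starRingEnd ℂ θ)
          (by rw [RCLike.norm_conj]; exact hθ)
        have happ : (x - (innerSL ℂ ((starRingEnd ℂ θ) • ζ)).smulRight η₀) ζ
            = x ζ - θ • η₀ := by
          simp only [sub_apply, smulRight_apply, innerSL_apply_apply]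
          rw [inner_smul_left, Complex.conj_conj, inner_self_eq_norm_sq_to_K, hζ]
          norm_num
        calc ‖x ζ - θ • η₀‖ = ‖(x - (innerSL ℂ ((starRingEnd ℂ θ) • ζ)).smulRight η₀) ζ‖ := by
              rw [happ]
          _ ≤ ‖x - (innerSL ℂ ((starRingEnd ℂ θ) • ζ)).smulRight η₀‖ * ‖ζ‖ := le_opNorm _ _
          _ ≤ 1 := by rw [hζ, mul_one]; exact hv
      intro ξ heξ
      by_cases hξ0 : ξ = 0
      · rw [hξ0, map_zero]
      have hn0 : (‖ξ‖ : ℂ) ≠ 0 := by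
        exact_mod_cast norm_ne_zero_iff.mpr hξ0
      have hζ : ‖((‖ξ‖⁻¹ : ℂ)) • ξ‖ = 1 := by
        rw [norm_smul]
        simp [norm_ne_zero_iff.mpr hξ0]
      have h0 := key1u _ hζ (by rw [map_smul, heξ, smul_zero])
      rw [map_smul, smul_eq_zero] at h0
      rcases h0 with h0 | h0
      · exact absurd h0 (inv_ne_zero hn0)
      · exact h0
    have key2 : ∀ η : H, adjoint e η = 0 → adjoint x η = 0 := by
      have key2u : ∀ ζ : H, ‖ζ‖ = 1 → adjoint e ζ = 0 → adjoint x ζ = 0 := by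
        intro ζ hζ heζ
        apply zero_of_dist_smul_le _ ξ₀ hξ₀
        intro θ hθ
        have hv := hmk ξ₀ ζ hξ₀ hζ heξ₀ heζ θ hθ
        set v : H →L[ℂ] H := (innerSL ℂ (θ • ξ₀)).smulRight ζ with hvdef
        have hadj : adjoint v = (innerSL ℂ ζ).smulRight (θ • ξ₀) := rankOne_adjoint _ _
        have hnorm : ‖adjoint x - adjoint v‖ ≤ 1 := by
          rw [← map_sub, adjoint.norm_map]
          exact hv
        have happ : (adjoint x - adjoint v) ζ = adjoint x ζ - θ • ξ₀ := by
          rw [sub_apply, hadj]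
          congr 1
          simp only [smulRight_apply, innerSL_apply_apply]
          rw [inner_self_eq_norm_sq_to_K, hζ]
          simp
        calc ‖adjoint x ζ - θ • ξ₀‖ = ‖(adjoint x - adjoint v) ζ‖ := by rw [happ]
          _ ≤ ‖adjoint x - adjoint v‖ * ‖ζ‖ := le_opNorm _ _
          _ ≤ 1 := by rw [hζ, mul_one]; exact hnorm
      intro η heη
      by_cases hη0 : η = 0
      · rw [hη0, map_zero]
      have hn0 : (‖η‖ : ℂ) ≠ 0 := by
        exact_mod_cast norm_ne_zero_iff.mpr hη0
      have hζ : ‖((‖η‖⁻¹ : ℂ)) • η‖ = 1 := by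
        rw [norm_smul]
        simp [norm_ne_zero_iff.mpr hη0]
      have h0 := key2u _ hζ (by rw [map_smul, heη, smul_zero])
      rw [map_smul, smul_eq_zero] at h0
      rcases h0 with h0 | h0
      · exact absurd h0 (inv_ne_zero hn0)
      · exact h0
    refine ContinuousLinearMap.ext fun u => ?_
    show e (adjoint e (x (adjoint e (e u)))) = x u
    have h1 : x (adjoint e (e u)) = x u := by
      have hz : x (u - adjoint e (e u)) = 0 := key1 _ (by rw [map_sub, hpe' u, sub_self])
      rw [map_sub, sub_eq_zero] at hz
      exact hz.symm
    rw [h1]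
    set w := x u - e (adjoint e (x u)) with hw
    have hew : adjoint e w = 0 := by
      rw [hw, map_sub, hee (x u), sub_self]
    have hxw : adjoint x w = 0 := key2 w hew
    have h2 : (inner ℂ w w : ℂ) = 0 := by
      nth_rewrite 1 [hw]
      rw [inner_sub_left]
      have ha : (inner ℂ (x u) w : ℂ) = 0 := by
        rw [← inner_conj_symm, ← adjoint_inner_left, hxw, inner_zero_left, map_zero]
      have hb : (inner ℂ (e (adjoint e (x u))) w : ℂ) = 0 := by
        rw [← inner_conj_symm, ← adjoint_inner_left, hew, inner_zero_left, map_zero]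
      rw [ha, hb, sub_zero]
    have hw0 : w = 0 := inner_self_eq_zero.mp h2
    rw [hw, sub_eq_zero] at hw0
    exact hw0.symm
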